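/- arXiv:1103.2093 — 2 statements merged into one kernel-verified Lean document; each statement's English description precedes it below -/
import Mathlib

section
/- If Δ ⊆ ℝ^d is a Q-reflexive polytope, then its dual Δ° := [Δ]* is a Q-reflexive polytope and (Δ°)° = Δ; thus Δ ↦ Δ° is an involution on the set of Q-reflexive polytopes in ℝ^d. -/
open Pointwise

noncomputable section

/-- The standard inner product on `n → ℝ`. -/
def dot {n : Type*} [Fintype n] (x y : n → ℝ) : ℝ := ∑ i, x i * y i

/-- The lattice points of `n → ℝ`: points with integer coordinates. -/
def latt (n : Type*) [Fintype n] : Set (n → ℝ) := {x | ∀ i, ∃ m : ℤ, x i = (m : ℝ)}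

/-- Polar dual `S* = {y | ⟨x,y⟩ ≥ -1 ∀ x ∈ S}`. -/
def polarDual {n : Type*} [Fintype n] (S : Set (n → ℝ)) : Set (n → ℝ) :=
  {y | ∀ x ∈ S, -1 ≤ dot x y}

/-- `[S]`: the convex hull of the lattice points of `S`. -/
def latticeHull {n : Type*} [Fintype n] (S : Set (n → ℝ)) : Set (n → ℝ) :=
  convexHull ℝ (S ∩ latt n)

/-- A polytope: the convex hull of a finite set. -/
def IsPolytope {n : Type*} [Fintype n] (P : Set (n → ℝ)) : Prop :=
  ∃ F : Set (n → ℝ), F.Finite ∧ P = convexHull ℝ F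

/-- A lattice polytope: the convex hull of a finite set of lattice points. -/
def IsLatticePolytope {n : Type*} [Fintype n] (P : Set (n → ℝ)) : Prop :=
  ∃ F : Set (n → ℝ), F.Finite ∧ F ⊆ latt n ∧ P = convexHull ℝ F

/-- A full-dimensional polytope `P` with `0` in its interior is Q-reflexive if
`[[P]*] = P*`. -/
def IsQReflexive {n : Type*} [Fintype n] (P : Set (n → ℝ)) : Prop :=
  IsPolytope P ∧ 0 ∈ interior P ∧ latticeHull (polarDual (latticeHull P)) = polarDual P

/-- A full-dimensional lattice polytope `P` with `0` in its interior is almost reflexive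
if `[[P*]*] = P`. -/
def IsAlmostReflexive {n : Type*} [Fintype n] (P : Set (n → ℝ)) : Prop :=
  IsLatticePolytope P ∧ 0 ∈ interior P ∧
    latticeHull (polarDual (latticeHull (polarDual P))) = P

/-- A full-dimensional lattice polytope `P` with `0` in its interior is reflexive
if `P*` is a lattice polytope. -/
def IsReflexive {n : Type*} [Fintype n] (P : Set (n → ℝ)) : Prop :=
  IsLatticePolytope P ∧ 0 ∈ interior P ∧ IsLatticePolytope (polarDual P)

section Helpers

variable {n : Type*} [Fintype n]

lemma dot_comm (x y : n → ℝ) : dot x y = dot y x := by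
  simp [dot, mul_comm]

lemma dot_add_right (x y z : n → ℝ) : dot x (y + z) = dot x y + dot x z := by
  simp [dot, mul_add, Finset.sum_add_distrib]

lemma dot_smul_right (x : n → ℝ) (c : ℝ) (y : n → ℝ) : dot x (c • y) = c * dot x y := by
  simp only [dot, Finset.mul_sum, Pi.smul_apply, smul_eq_mul]; congr 1; ext i; ring

lemma dot_zero_right (x : n → ℝ) : dot x 0 = 0 := by simp [dot]

lemma dot_sub_right (x y z : n → ℝ) : dot x (y - z) = dot x y - dot x z := by
  simp [dot, mul_sub, Finset.sum_sub_distrib]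

lemma continuous_dot (x : n → ℝ) : Continuous (dot x) :=
  continuous_finset_sum _ fun i _ => continuous_const.mul (continuous_apply i)

lemma mem_polarDual {S : Set (n → ℝ)} {y : n → ℝ} :
    y ∈ polarDual S ↔ ∀ x ∈ S, -1 ≤ dot x y := Iff.rfl

lemma polarDual_anti {S T : Set (n → ℝ)} (h : S ⊆ T) : polarDual T ⊆ polarDual S :=
  fun _ hy x hx => hy x (h hx)

lemma zero_mem_polarDual (S : Set (n → ℝ)) : (0 : n → ℝ) ∈ polarDual S :=
  fun x _ => by rw [dot_zero_right]; norm_num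

lemma convex_polarDual (S : Set (n → ℝ)) : Convex ℝ (polarDual S) := by
  intro y hy z hz a b ha hb hab x hx
  have h1 := hy x hx
  have h2 := hz x hx
  rw [dot_add_right, dot_smul_right, dot_smul_right]
  nlinarith

lemma isClosed_polarDual (S : Set (n → ℝ)) : IsClosed (polarDual S) := by
  have : polarDual S = ⋂ x ∈ S, {y | -1 ≤ dot x y} := by
    ext y; simp [mem_polarDual]
  rw [this]
  exact isClosed_biInter fun x _ => isClosed_le continuous_const (continuous_dot x)

lemma polarDual_convexHull (S : Set (n → ℝ)) :
    polarDual (convexHull ℝ S) = polarDual S := by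
  refine subset_antisymm (polarDual_anti (subset_convexHull ℝ S)) fun y hy x hx => ?_
  have hconv : Convex ℝ {x : n → ℝ | -1 ≤ dot x y} := by
    intro a ha b hb p q hp hq hpq
    simp only [Set.mem_setOf_eq] at ha hb ⊢
    rw [dot_comm, dot_add_right, dot_smul_right, dot_smul_right, dot_comm y a, dot_comm y b]
    nlinarith
  exact convexHull_min (fun z hz => hy z hz) hconv hx

lemma subset_polarDual_polarDual (S : Set (n → ℝ)) : S ⊆ polarDual (polarDual S) :=
  fun x hx y hy => by rw [dot_comm]; exact hy x hx

lemma repr_dot [DecidableEq n] (f : (n → ℝ) →L[ℝ] ℝ) (w : n → ℝ) :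
    f w = dot (fun i => f (Pi.single i 1)) w := by
  rw [dot_comm]
  have hrepr : w = ∑ i, w i • (Pi.single i (1:ℝ) : n → ℝ) := by
    ext j; simp [Pi.single_apply, Finset.sum_apply]
  conv_lhs => rw [hrepr]
  rw [map_sum]
  simp [dot, map_smul]

lemma polarDual_polarDual [DecidableEq n] {S : Set (n → ℝ)} (hconv : Convex ℝ S) (hcl : IsClosed S)
    (h0 : 0 ∈ S) : polarDual (polarDual S) = S := by
  refine subset_antisymm ?_ (subset_polarDual_polarDual S)
  intro z hz
  by_contra hzS
  obtain ⟨f, u, hfu, huz⟩ := geometric_hahn_banach_closed_point hconv hcl hzS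
  have hu : 0 < u := by have := hfu 0 h0; simpa using this
  set w : n → ℝ := fun i => f (Pi.single i 1) with hw
  have hy : (-u⁻¹) • w ∈ polarDual S := by
    intro a ha
    rw [dot_smul_right]
    have hfa : f a < u := hfu a ha
    have : dot a w = f a := by rw [dot_comm, ← repr_dot]
    rw [this]
    rw [neg_mul]
    have : u⁻¹ * f a < 1 := by
      rw [← div_eq_inv_mul]
      exact (div_lt_one hu).2 hfa
    linarith
  have h1 := hz _ hy
  rw [dot_comm, dot_smul_right] at h1
  have : dot z w = f z := by rw [dot_comm, ← repr_dot]
  rw [this] at h1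
  have : 1 < u⁻¹ * f z := by
    rw [← div_eq_inv_mul]
    exact (one_lt_div hu).2 huz
  linarith

lemma zero_mem_latt : (0 : n → ℝ) ∈ latt n := fun _ => ⟨0, by simp⟩

lemma finite_latt_inter_bounded {S : Set (n → ℝ)} (hS : Bornology.IsBounded S) :
    (S ∩ latt n).Finite := by
  obtain ⟨C, hC⟩ := hS.exists_norm_le
  apply Set.Finite.of_finite_image (f := fun x : n → ℝ => fun i => ⌊x i⌋)
  · apply Set.Finite.subset (Set.Finite.pi fun _ : n => Set.finite_Icc (⌈-C⌉ : ℤ) ⌊C⌋)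
    rintro _ ⟨x, ⟨hxS, hxl⟩, rfl⟩
    intro i _
    obtain ⟨m, hm⟩ := hxl i
    have h1 : ‖x i‖ ≤ C := (norm_le_pi_norm x i).trans (hC x hxS)
    rw [Real.norm_eq_abs, abs_le] at h1
    simp only [hm, Int.floor_intCast, Set.mem_Icc]
    constructor
    · rw [Int.ceil_le]; rw [← hm]; linarith [h1.1]
    · rw [Int.le_floor]; rw [← hm]; exact h1.2
  · rintro x ⟨_, hxl⟩ y ⟨_, hyl⟩ hxy
    funext i
    obtain ⟨mx, hmx⟩ := hxl i
    obtain ⟨my, hmy⟩ := hyl i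
    have := congrFun hxy i
    simp only [hmx, hmy, Int.floor_intCast] at this
    rw [hmx, hmy, this]

lemma exists_ball_subset_polarDual {S : Set (n → ℝ)} (hS : Bornology.IsBounded S) :
    ∃ ε > 0, ∀ y : n → ℝ, ‖y‖ < ε → y ∈ polarDual S := by
  obtain ⟨C, hC⟩ := hS.exists_norm_le
  set D : ℝ := (Fintype.card n : ℝ) * C
  refine ⟨(|D| + 1)⁻¹, by positivity, fun y hy x hx => ?_⟩
  have habs : |dot x y| ≤ D * ‖y‖ := by
    calc |dot x y| ≤ ∑ i, |x i * y i| := Finset.abs_sum_le_sum_abs _ _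
      _ ≤ ∑ _i : n, C * ‖y‖ := by
          apply Finset.sum_le_sum
          intro i _
          rw [abs_mul]
          have h1 : |x i| ≤ C := by
            have := (norm_le_pi_norm x i).trans (hC x hx); rwa [Real.norm_eq_abs] at this
          have h2 : |y i| ≤ ‖y‖ := by
            have := norm_le_pi_norm y i; rwa [Real.norm_eq_abs] at this
          exact mul_le_mul h1 h2 (abs_nonneg _) ((abs_nonneg _).trans h1)
      _ = D * ‖y‖ := by rw [Finset.sum_const, Finset.card_univ]; simp [D, mul_assoc]
  have hD : D * ‖y‖ < 1 := by
    have h0 : (0:ℝ) ≤ ‖y‖ := norm_nonneg y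
    have : D * ‖y‖ ≤ (|D| + 1) * ‖y‖ := by nlinarith [le_abs_self D]
    have h2 : (|D| + 1) * ‖y‖ < (|D| + 1) * (|D| + 1)⁻¹ := by
      apply mul_lt_mul_of_pos_left hy; positivity
    rw [mul_inv_cancel₀ (by positivity)] at h2
    linarith
  have h3 := neg_abs_le (dot x y)
  have h4 := (abs_le.1 habs).1
  linarith

lemma polarDual_subset_closedBall [DecidableEq n] {S : Set (n → ℝ)} {ε : ℝ} (hε : 0 < ε)
    (hball : ∀ x : n → ℝ, ‖x‖ < ε → x ∈ S) :
    ∀ y ∈ polarDual S, ‖y‖ ≤ 2 / ε := by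
  intro y hy
  rw [pi_norm_le_iff_of_nonneg (by positivity)]
  intro i
  have key : ∀ c : ℝ, |c| < ε → -1 ≤ c * y i := by
    intro c hc
    have hx : (Pi.single i c : n → ℝ) ∈ S := by
      apply hball
      apply lt_of_le_of_lt _ hc
      rw [pi_norm_le_iff_of_nonneg (abs_nonneg c)]
      intro j
      rcases eq_or_ne j i with rfl | hj
      · simp
      · simp [Pi.single_apply, hj]
    have hds : dot (Pi.single i c : n → ℝ) y = c * y i := by
      simp [dot, Pi.single_apply, ite_mul, Finset.sum_ite_eq]
    have := hy _ hx
    rwa [hds] at this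
  have h1 := key (ε/2) (by rw [abs_of_pos (by linarith)]; linarith)
  have h2 := key (-(ε/2)) (by rw [abs_neg, abs_of_pos (by linarith)]; linarith)
  rw [Real.norm_eq_abs, abs_le]
  have e1 : ε / 2 * y i = y i * ε / 2 := by ring
  have e2 : -(ε / 2) * y i = -(y i * ε) / 2 := by ring
  rw [e1] at h1
  rw [e2] at h2
  constructor
  · rw [neg_le, ← neg_mul] at *
    exact (le_div_iff₀ hε).2 (by linarith)
  · exact (le_div_iff₀ hε).2 (by linarith)

lemma isPolytope_polarDual_of_finite {G : Set (n → ℝ)} (hG : G.Finite)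
    (hb : Bornology.IsBounded (polarDual G)) : IsPolytope (polarDual G) := by
  set K := polarDual G with hK
  have hKcomp : IsCompact K := Metric.isCompact_of_isClosed_isBounded (isClosed_polarDual G) hb
  have hKconv : Convex ℝ K := convex_polarDual G
  have hKM := closure_convexHull_extremePoints hKcomp hKconv
  set E := K.extremePoints ℝ with hE
  -- E is finite
  have hEfin : E.Finite := by
    apply Set.Finite.of_finite_image (f := fun y => {x ∈ G | dot x y = -1})
    · exact Set.Finite.subset hG.finite_subsets (by rintro _ ⟨y, _, rfl⟩; exact Set.sep_subset _ _)
    · intro y₁ hy₁ y₂ hy₂ hA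
      rw [mem_extremePoints] at hy₁
      obtain ⟨hy₁K, hext⟩ := hy₁
      have hy₂K : y₂ ∈ K := hy₂.1
      set v := y₂ - y₁ with hv
      have hkey : ∀ x ∈ G, dot x y₁ = -1 → dot x v = 0 := by
        intro x hx hxy₁
        have hA' : {x ∈ G | dot x y₁ = -1} = {x ∈ G | dot x y₂ = -1} := hA
        have hxA : x ∈ {x ∈ G | dot x y₁ = -1} := ⟨hx, hxy₁⟩
        rw [hA'] at hxA
        rw [hv, dot_sub_right, hxA.2, hxy₁]
        ring
      -- find t > 0 with margin on inactive constraints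
      obtain ⟨t, ht, htb⟩ : ∃ t : ℝ, 0 < t ∧ ∀ x ∈ G, dot x y₁ ≠ -1 →
          t * |dot x v| < dot x y₁ + 1 := by
        classical
        set T := hG.toFinset.filter fun x => dot x y₁ ≠ -1 with hT
        set c : (n → ℝ) → ℝ := fun x => (dot x y₁ + 1) / (|dot x v| + 1) with hc
        refine ⟨(insert (1:ℝ) (T.image c)).inf' (Finset.insert_nonempty _ _) id, ?_, ?_⟩
        · rw [Finset.lt_inf'_iff]
          rintro b hb'
          rcases Finset.mem_insert.1 hb' with rfl | hb''
          · norm_num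
          · obtain ⟨x, hxT, rfl⟩ := Finset.mem_image.1 hb''
            rw [hT, Finset.mem_filter] at hxT
            have hxG : x ∈ G := hG.mem_toFinset.1 hxT.1
            have hge : -1 ≤ dot x y₁ := hy₁K x hxG
            have hgt : -1 < dot x y₁ := lt_of_le_of_ne hge (Ne.symm hxT.2)
            simp only [id, hc]
            exact div_pos (by linarith) (by positivity)
        · intro x hxG hxne
          have hxT : x ∈ T := by
            rw [hT, Finset.mem_filter]; exact ⟨hG.mem_toFinset.2 hxG, hxne⟩
          have hle : (insert (1:ℝ) (T.image c)).inf' (Finset.insert_nonempty _ _) id ≤ c x :=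
            Finset.inf'_le id (Finset.mem_insert_of_mem (Finset.mem_image_of_mem c hxT))
          set t := (insert (1:ℝ) (T.image c)).inf' (Finset.insert_nonempty _ _) id
          have ht0 : 0 < t := by
            rw [Finset.lt_inf'_iff]
            rintro b hb'
            rcases Finset.mem_insert.1 hb' with rfl | hb''
            · norm_num
            · obtain ⟨x', hxT', rfl⟩ := Finset.mem_image.1 hb''
              rw [hT, Finset.mem_filter] at hxT'
              have hxG' : x' ∈ G := hG.mem_toFinset.1 hxT'.1
              have hge := hy₁K x' hxG'
              have hgt : -1 < dot x' y₁ := lt_of_le_of_ne hge (Ne.symm hxT'.2)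
              simp only [id, hc]
              exact div_pos (by linarith) (by positivity)
          have hd0 : 0 < |dot x v| + 1 := by positivity
          have h1 : t * (|dot x v| + 1) ≤ c x * (|dot x v| + 1) :=
            mul_le_mul_of_nonneg_right hle hd0.le
          rw [hc, div_mul_cancel₀ _ hd0.ne'] at h1
          nlinarith
      -- y₁ ± t v ∈ K
      have hmem : ∀ s : ℝ, |s| ≤ t → y₁ + s • v ∈ K := by
        intro s hs x hxG
        rw [dot_add_right, dot_smul_right]
        rcases eq_or_ne (dot x y₁) (-1) with heq | hne
        · rw [hkey x hxG heq, heq]; simp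
        · have h1 := htb x hxG hne
          have h2 : |s * dot x v| ≤ t * |dot x v| := by
            rw [abs_mul]
            exact mul_le_mul_of_nonneg_right hs (abs_nonneg _)
          have h3 := neg_abs_le (s * dot x v)
          linarith
      have hm1 : y₁ + t • v ∈ K := hmem t (le_of_eq (abs_of_pos ht))
      have hm2 : y₁ + (-t) • v ∈ K := hmem (-t) (le_of_eq (abs_neg t ▸ abs_of_pos ht))
      have hseg : y₁ ∈ openSegment ℝ (y₁ + (-t) • v) (y₁ + t • v) := by
        refine ⟨1/2, 1/2, by norm_num, by norm_num, by norm_num, ?_⟩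
        module
      have := (hext _ hm2 _ hm1 hseg).2
      have htv : t • v = 0 := by
        have h := congrArg (fun z => z - y₁) this
        simpa using h
      have hv0 : v = 0 := by
        rcases smul_eq_zero.1 htv with h | h
        · exact absurd h ht.ne'
        · exact h
      have := sub_eq_zero.1 hv0
      exact this.symm
  refine ⟨E, hEfin, ?_⟩
  rw [← hKM]
  exact (IsCompact.isClosed (hEfin.isCompact_convexHull (𝕜 := ℝ))).closure_eq

lemma abs_sub_lt_of_floor_div_eq {δ a b : ℝ} (hδ : 0 < δ) (h : ⌊a / δ⌋ = ⌊b / δ⌋) :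
    |a - b| < δ := by
  have h1 := Int.floor_le (a / δ)
  have h2 := Int.lt_floor_add_one (a / δ)
  have h3 := Int.floor_le (b / δ)
  have h4 := Int.lt_floor_add_one (b / δ)
  rw [h] at h1 h2
  have h5 : |a / δ - b / δ| < 1 := abs_sub_lt_iff.2 ⟨by linarith, by linarith⟩
  have h6 : a - b = δ * (a / δ - b / δ) := by field_simp
  rw [h6, abs_mul, abs_of_pos hδ]
  calc δ * |a / δ - b / δ| < δ * 1 := mul_lt_mul_of_pos_left h5 hδ
    _ = δ := mul_one δ

lemma exists_nat_close (v : n → ℝ) {δ : ℝ} (hδ : 0 < δ) :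
    ∃ (t : ℕ) (m : n → ℤ), 1 ≤ t ∧ ∀ i, |(t : ℝ) * v i - (m i : ℝ)| < δ := by
  set g : ℕ → n → ℤ := fun N i => ⌊Int.fract ((N : ℝ) * v i) / δ⌋ with hg
  have hmaps : Set.MapsTo g Set.univ (Set.pi Set.univ fun _ : n => Set.Icc (0 : ℤ) ⌈1/δ⌉) := by
    intro N _
    intro i _
    constructor
    · exact Int.floor_nonneg.2 (div_nonneg (Int.fract_nonneg _) hδ.le)
    · refine le_trans (Int.floor_le_floor ?_) (Int.floor_le_ceil _)
      exact (div_le_div_iff_of_pos_right hδ).2 (Int.fract_lt_one _).le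
  obtain ⟨N₁, -, N₂, -, hne, heq⟩ :=
    Set.infinite_univ.exists_ne_map_eq_of_mapsTo hmaps
      (Set.Finite.pi fun _ => Set.finite_Icc _ _)
  have key : ∀ a b : ℕ, a < b → g a = g b →
      ∃ (t : ℕ) (m : n → ℤ), 1 ≤ t ∧ ∀ i, |(t : ℝ) * v i - (m i : ℝ)| < δ := by
    intro a b hab hgab
    refine ⟨b - a, fun i => ⌊(b : ℝ) * v i⌋ - ⌊(a : ℝ) * v i⌋, by omega, fun i => ?_⟩
    have hcast : ((b - a : ℕ) : ℝ) = (b : ℝ) - (a : ℝ) := by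
      push_cast [Nat.cast_sub hab.le]; ring
    have hfl := congrFun hgab i
    simp only [hg] at hfl
    have habs := abs_sub_lt_of_floor_div_eq hδ hfl.symm
    have hrw : ((b - a : ℕ) : ℝ) * v i - ((⌊(b : ℝ) * v i⌋ - ⌊(a : ℝ) * v i⌋ : ℤ) : ℝ) =
        Int.fract ((b : ℝ) * v i) - Int.fract ((a : ℝ) * v i) := by
      rw [hcast, Int.cast_sub]
      rw [Int.fract, Int.fract]
      ring
    rw [hrw]
    exact habs
  rcases hne.lt_or_gt with h | h
  · exact key N₁ N₂ h heq
  · exact key N₂ N₁ h heq.symm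

lemma isBounded_polarDual {G : Set (n → ℝ)} {ε R : ℝ} (hε : 0 < ε)
    (hball : ∀ y : n → ℝ, ‖y‖ < ε → y ∈ polarDual G)
    (hR : ∀ z ∈ latticeHull (polarDual G), ‖z‖ ≤ R) :
    Bornology.IsBounded (polarDual G) := by
  by_contra hub
  rw [isBounded_iff_forall_norm_le] at hub
  push_neg at hub
  have hchoice : ∀ N : ℕ, ∃ y ∈ polarDual G, (N : ℝ) + 1 < ‖y‖ := fun N => hub _
  choose y hyK hy using hchoice
  have hypos : ∀ N, 0 < ‖y N‖ := fun N => lt_of_le_of_lt (by positivity) (hy N)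
  set u : ℕ → n → ℝ := fun N => (‖y N‖)⁻¹ • y N with hu
  have husph : ∀ N, u N ∈ Metric.sphere (0 : n → ℝ) 1 := by
    intro N
    rw [mem_sphere_zero_iff_norm, hu, norm_smul, norm_inv, norm_norm,
      inv_mul_cancel₀ (hypos N).ne']
  obtain ⟨v, hvsph, φ, hφ, hφt⟩ := (isCompact_sphere (0 : n → ℝ) 1).tendsto_subseq husph
  have hv1 : ‖v‖ = 1 := mem_sphere_zero_iff_norm.1 hvsph
  -- dot x v ≥ 0 for all x ∈ G
  have hv0 : ∀ x ∈ G, 0 ≤ dot x v := by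
    intro x hx
    have hd : Filter.Tendsto (fun k => dot x (u (φ k))) Filter.atTop (nhds (dot x v)) :=
      ((continuous_dot x).tendsto v).comp hφt
    have hnlim : Filter.Tendsto (fun k : ℕ => -((k : ℝ) + 1)⁻¹) Filter.atTop (nhds (-0)) := by
      apply Filter.Tendsto.neg
      apply Filter.Tendsto.comp tendsto_inv_atTop_zero
      apply Filter.tendsto_atTop_add_const_right
      exact tendsto_natCast_atTop_atTop
    rw [neg_zero] at hnlim
    refine le_of_tendsto_of_tendsto' hnlim hd fun k => ?_
    have h1 : -1 ≤ dot x (y (φ k)) := hyK (φ k) x hx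
    have h2 : dot x (u (φ k)) = (‖y (φ k)‖)⁻¹ * dot x (y (φ k)) := dot_smul_right _ _ _
    have h3 : (0:ℝ) < ‖y (φ k)‖ := hypos (φ k)
    have h4 : (k : ℝ) + 1 ≤ ‖y (φ k)‖ := by
      have := hy (φ k)
      have hk : (k : ℝ) ≤ (φ k : ℝ) := by exact_mod_cast (hφ.id_le k)
      linarith
    have h5 : (‖y (φ k)‖)⁻¹ ≤ ((k : ℝ) + 1)⁻¹ := by
      apply inv_anti₀ (by positivity) h4
    rw [h2]
    have h6 : -(‖y (φ k)‖)⁻¹ ≤ (‖y (φ k)‖)⁻¹ * dot x (y (φ k)) := by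
      have := mul_le_mul_of_nonneg_left h1 (by positivity : (0:ℝ) ≤ (‖y (φ k)‖)⁻¹)
      linarith
    linarith
  -- coordinate with |v i₀| > 1/2
  obtain ⟨i₀, hi₀⟩ : ∃ i₀, 1/2 < |v i₀| := by
    by_contra hc
    push_neg at hc
    have : ‖v‖ ≤ 1/2 := by
      rw [pi_norm_le_iff_of_nonneg (by norm_num)]
      intro i
      rw [Real.norm_eq_abs]
      exact hc i
    rw [hv1] at this
    norm_num at this
  -- R is nonneg since 0 ∈ latticeHull (polarDual G)
  have hR0 : 0 ≤ R := by
    have h0 : (0 : n → ℝ) ∈ latticeHull (polarDual G) :=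
      subset_convexHull ℝ _ ⟨zero_mem_polarDual G, zero_mem_latt⟩
    have := hR 0 h0
    simpa using this
  obtain ⟨j, hj⟩ := exists_nat_gt (2 * R + ε + 2)
  have hjpos : (0:ℝ) < j := by linarith
  set δ : ℝ := ε / (2 * j) with hδdef
  have hδ : 0 < δ := by positivity
  obtain ⟨t, m, ht, hm⟩ := exists_nat_close v hδ
  set w : n → ℝ := fun i => ((j * m i : ℤ) : ℝ) with hw
  set b : n → ℝ := w - ((j : ℝ) * t) • v with hb
  have hbi : ∀ i, |b i| ≤ ε / 2 := by
    intro i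
    have h1 := hm i
    have h2 : b i = -((j:ℝ) * ((t:ℝ) * v i - (m i : ℝ))) := by
      simp only [hb, hw, Pi.sub_apply, Pi.smul_apply, smul_eq_mul]
      push_cast
      ring
    rw [h2, abs_neg, abs_mul, abs_of_pos hjpos]
    calc (j:ℝ) * |(t:ℝ) * v i - (m i : ℝ)| ≤ (j:ℝ) * δ := by
          exact mul_le_mul_of_nonneg_left h1.le hjpos.le
      _ = ε / 2 := by rw [hδdef]; field_simp
  have hbnorm : ‖b‖ ≤ ε / 2 := by
    rw [pi_norm_le_iff_of_nonneg (by positivity)]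
    intro i
    rw [Real.norm_eq_abs]
    exact hbi i
  have hbK : b ∈ polarDual G := hball b (lt_of_le_of_lt hbnorm (by linarith))
  have hwK : w ∈ polarDual G := by
    intro x hx
    have h1 : dot x w = ((j:ℝ) * t) * dot x v + dot x b := by
      have : w = ((j : ℝ) * t) • v + b := by rw [hb]; abel
      rw [this, dot_add_right, dot_smul_right]
    rw [h1]
    have h2 := hbK x hx
    have h3 : 0 ≤ ((j:ℝ) * t) * dot x v := by
      apply mul_nonneg (by positivity) (hv0 x hx)
    linarith
  have hwlatt : w ∈ latt n := fun i => ⟨j * m i, rfl⟩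
  have hwhull : w ∈ latticeHull (polarDual G) := subset_convexHull ℝ _ ⟨hwK, hwlatt⟩
  have hwR : ‖w‖ ≤ R := hR w hwhull
  -- but |w i₀| is large
  have hwi₀ : R + 1 ≤ |w i₀| := by
    have h1 : |((j:ℝ) * t) * v i₀| - |b i₀| ≤ |w i₀| := by
      have : w i₀ = ((j:ℝ) * t) * v i₀ + b i₀ := by
        simp only [hb, Pi.sub_apply, Pi.smul_apply, smul_eq_mul]; ring
      rw [this]
      have := abs_add_le (((j:ℝ) * t) * v i₀ + b i₀) (-(b i₀))
      simp only [add_neg_cancel_right, abs_neg] at this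
      linarith
    have h2 : (j:ℝ) * 1 * (1/2) ≤ ((j:ℝ) * t) * |v i₀| := by
      have htr : (1:ℝ) ≤ (t:ℝ) := by exact_mod_cast ht
      have hstep : (1:ℝ) * (1/2) ≤ (t:ℝ) * |v i₀| :=
        mul_le_mul htr hi₀.le (by norm_num) (by linarith)
      have := mul_le_mul_of_nonneg_left hstep hjpos.le
      nlinarith
    have h3 : |((j:ℝ) * t) * v i₀| = (j:ℝ) * t * |v i₀| := by
      rw [abs_mul, abs_of_nonneg (by positivity)]
    have h4 := hbi i₀
    have : (j:ℝ) / 2 - ε / 2 ≤ |w i₀| := by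
      rw [h3] at h1
      nlinarith
    linarith
  have : |w i₀| ≤ R := by
    have := norm_le_pi_norm w i₀
    rw [Real.norm_eq_abs] at this
    linarith
  linarith

end Helpers

/-- If `Δ ⊆ ℝ^d` is a Q-reflexive polytope, then its dual `Δ° := [Δ]*`
is a Q-reflexive polytope and `(Δ°)° = Δ`; thus `Δ ↦ Δ°` is an involution on the set
of Q-reflexive polytopes in `ℝ^d`. -/
theorem qreflexive_dual_involution {d : ℕ} (hd : 0 < d) (Δ : Set (Fin d → ℝ))
    (h : IsQReflexive Δ) :
    IsQReflexive (polarDual (latticeHull Δ)) ∧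
      polarDual (latticeHull (polarDual (latticeHull Δ))) = Δ := by
  obtain ⟨⟨F, hFfin, hΔF⟩, h0, hQ⟩ := h
  have hΔconv : Convex ℝ Δ := hΔF ▸ convex_convexHull ℝ F
  have hΔcomp : IsCompact Δ := hΔF ▸ hFfin.isCompact_convexHull (𝕜 := ℝ)
  have hΔcl : IsClosed Δ := hΔcomp.isClosed
  have hΔbdd : Bornology.IsBounded Δ := hΔcomp.isBounded
  have h0Δ : (0 : Fin d → ℝ) ∈ Δ := interior_subset h0
  -- lattice points of Δ
  have hGfin : (Δ ∩ latt (Fin d)).Finite := finite_latt_inter_bounded hΔbdd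
  have hGbdd : Bornology.IsBounded (Δ ∩ latt (Fin d)) :=
    hΔbdd.subset Set.inter_subset_left
  -- latticeHull Δ properties
  have hLconv : Convex ℝ (latticeHull Δ) := convex_convexHull ℝ _
  have hLcomp : IsCompact (latticeHull Δ) := hGfin.isCompact_convexHull (𝕜 := ℝ)
  have hLcl : IsClosed (latticeHull Δ) := hLcomp.isClosed
  have h0L : (0 : Fin d → ℝ) ∈ latticeHull Δ :=
    subset_convexHull ℝ _ ⟨h0Δ, zero_mem_latt⟩
  -- K = polarDual (latticeHull Δ) = polarDual (Δ ∩ latt)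
  have hKG : polarDual (latticeHull Δ) = polarDual (Δ ∩ latt (Fin d)) :=
    polarDual_convexHull _
  -- bipolar identities
  have bipolar1 : polarDual (polarDual Δ) = Δ := polarDual_polarDual hΔconv hΔcl h0Δ
  have bipolar2 : polarDual (polarDual (latticeHull Δ)) = latticeHull Δ :=
    polarDual_polarDual hLconv hLcl h0L
  -- ball inside Δ from 0 ∈ interior Δ
  obtain ⟨ε, hε, hball⟩ : ∃ ε > 0, ∀ x : Fin d → ℝ, ‖x‖ < ε → x ∈ Δ := by
    rw [mem_interior_iff_mem_nhds, Metric.mem_nhds_iff] at h0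
    obtain ⟨ε, hε, hb⟩ := h0
    exact ⟨ε, hε, fun x hx => hb (by rwa [Metric.mem_ball, dist_zero_right])⟩
  -- polarDual Δ is bounded
  have hPΔbdd : ∀ z ∈ polarDual Δ, ‖z‖ ≤ 2 / ε := polarDual_subset_closedBall hε hball
  -- latticeHull K is bounded (it equals polarDual Δ)
  have hRlatt : ∀ z ∈ latticeHull (polarDual (Δ ∩ latt (Fin d))), ‖z‖ ≤ 2 / ε := by
    rw [← hKG, hQ]
    exact hPΔbdd
  -- ball inside K
  obtain ⟨ε', hε', hball'⟩ := exists_ball_subset_polarDual hGbdd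
  -- K is bounded
  have hKbdd : Bornology.IsBounded (polarDual (Δ ∩ latt (Fin d))) :=
    isBounded_polarDual hε' hball' hRlatt
  -- K is a polytope
  have hKpoly : IsPolytope (polarDual (latticeHull Δ)) := by
    rw [hKG]
    exact isPolytope_polarDual_of_finite hGfin hKbdd
  -- 0 in interior of K
  have hK0 : (0 : Fin d → ℝ) ∈ interior (polarDual (latticeHull Δ)) := by
    rw [hKG]
    rw [mem_interior]
    refine ⟨Metric.ball 0 ε', fun x hx => hball' x (by rwa [Metric.mem_ball, dist_zero_right] at hx),
      Metric.isOpen_ball, Metric.mem_ball_self hε'⟩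
  refine ⟨⟨hKpoly, hK0, ?_⟩, ?_⟩
  · -- latticeHull (polarDual (latticeHull K)) = polarDual K
    rw [hQ, bipolar1]
    exact bipolar2.symm
  · rw [hQ]
    exact bipolar1
end
end

section
/- Every facet of a Q-reflexive polytope contains a lattice point. Precisely: let Δ ⊆ ℝ^d be a Q-reflexive polytope and let v be an extreme point of Δ*. Then min_{x ∈ Δ} ⟨x, v⟩ = −1, and the facet F = {x ∈ Δ : ⟨x, v⟩ = −1} satisfies F ∩ ℤ^d ≠ ∅. -/
open Pointwise

noncomputable section

/-- Every facet of a Q-reflexive polytope contains a lattice point.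
Precisely: let `Δ ⊆ ℝ^d` be a Q-reflexive polytope and let `v` be an extreme point of
`Δ*`. Then `min_{x ∈ Δ} ⟨x, v⟩ = −1`, and the facet `F = {x ∈ Δ : ⟨x, v⟩ = −1}`
contains a lattice point. -/
theorem facet_contains_lattice_point {d : ℕ} (hd : 0 < d) (Δ : Set (Fin d → ℝ))
    (h : IsQReflexive Δ) (v : Fin d → ℝ) (hv : v ∈ Set.extremePoints ℝ (polarDual Δ)) :
    IsLeast {t : ℝ | ∃ x ∈ Δ, dot x v = t} (-1) ∧
      ({x ∈ Δ | dot x v = -1} ∩ latt (Fin d)).Nonempty := by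
  obtain ⟨⟨F, hF, hΔF⟩, hint, hQ⟩ := h
  have hvmem : v ∈ polarDual Δ := hv.1
  -- halfspaces are convex
  have hconv : ∀ (w : Fin d → ℝ) (a : ℝ), Convex ℝ {x : Fin d → ℝ | a ≤ dot x w} := by
    intro w a
    have hlin : IsLinearMap ℝ (fun x : Fin d → ℝ => dot x w) :=
      ⟨fun x y => by simp [dot, add_mul, Finset.sum_add_distrib],
       fun c x => by simp [dot, Finset.mul_sum, mul_assoc]⟩
    exact convex_halfSpace_ge hlin a
  -- v is a lattice point in (latticeHull Δ)*
  have hv2 : v ∈ polarDual (latticeHull Δ) ∩ latt (Fin d) := by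
    apply extremePoints_convexHull_subset (𝕜 := ℝ)
    have : polarDual Δ = convexHull ℝ (polarDual (latticeHull Δ) ∩ latt (Fin d)) := hQ.symm
    rwa [this] at hv
  -- v ≠ 0
  have i0 : Fin d := ⟨0, hd⟩
  have hv0 : v ≠ 0 := by
    intro h0
    obtain ⟨C, hC⟩ := ((hF.image (fun f => |f i0|)).bddAbove)
    set ε : ℝ := 1 / (max C 0 + 1) with hε
    have hεpos : 0 < ε := by positivity
    set w : Fin d → ℝ := Pi.single i0 ε with hw
    have hdotw : ∀ f : Fin d → ℝ, dot f w = f i0 * ε := by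
      intro f
      simp [dot, hw, Pi.single_apply, Finset.sum_ite_eq', mul_comm]
    have hbd : ∀ f ∈ F, |dot f w| ≤ 1 := by
      intro f hf
      have h1 : |f i0| ≤ max C 0 := le_max_of_le_left (hC ⟨f, hf, rfl⟩)
      rw [hdotw, abs_mul, abs_of_pos hεpos]
      calc |f i0| * ε ≤ (max C 0 + 1) * ε := by
            apply mul_le_mul_of_nonneg_right _ hεpos.le
            linarith
        _ = 1 := by rw [hε, mul_one_div_cancel (by linarith [le_max_right C 0] : max C 0 + 1 ≠ 0)]
    have hwin : w ∈ polarDual Δ := by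
      intro x hx
      rw [hΔF] at hx
      refine convexHull_min ?_ (hconv w (-1)) hx
      intro f hf
      have := hbd f hf
      have := abs_le.mp this
      exact this.1
    have hwin' : -w ∈ polarDual Δ := by
      intro x hx
      rw [hΔF] at hx
      refine convexHull_min ?_ (hconv (-w) (-1)) hx
      intro f hf
      have h2 := (abs_le.mp (hbd f hf)).2
      have : dot f (-w) = -(dot f w) := by simp [dot]
      simp only [Set.mem_setOf_eq, this]
      linarith
    have hseg : v ∈ openSegment ℝ w (-w) := by
      refine ⟨1/2, 1/2, by norm_num, by norm_num, by norm_num, ?_⟩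
      rw [h0]
      funext i
      simp
    have := hv.2 hwin hwin' hseg
    have hweq : w = v := this
    rw [h0] at hweq
    have : w i0 = 0 := by rw [hweq]; rfl
    rw [hw] at this
    simp [Pi.single_apply] at this
    exact hεpos.ne' this
  -- key: a lattice point on the facet
  have key : ∃ x ∈ Δ ∩ latt (Fin d), dot x v = -1 := by
    by_contra hno
    push_neg at hno
    -- all lattice points of Δ have dot ≥ 0
    have h0 : ∀ x ∈ Δ ∩ latt (Fin d), 0 ≤ dot x v := by
      intro x hx
      have hge : -1 ≤ dot x v := hv2.1 x (subset_convexHull ℝ _ hx)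
      have hne : dot x v ≠ -1 := hno x hx
      have hzint : ∀ i, ∃ z : ℤ, x i * v i = (z : ℝ) := by
        intro i
        obtain ⟨a, ha⟩ := hx.2 i
        obtain ⟨b, hb⟩ := hv2.2 i
        exact ⟨a * b, by push_cast; rw [ha, hb]⟩
      choose z hz using hzint
      have hdz : dot x v = ((∑ i, z i : ℤ) : ℝ) := by
        simp only [dot, hz]; push_cast; ring
      rw [hdz] at hge hne ⊢
      have : (-1 : ℤ) ≤ ∑ i, z i := by exact_mod_cast hge
      have hne' : (∑ i, z i : ℤ) ≠ -1 := by
        intro hh; apply hne; rw [hh]; norm_num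
      have : (0 : ℤ) ≤ ∑ i, z i := by omega
      exact_mod_cast this
    -- dot · v ≥ 0 on latticeHull Δ
    have h0' : ∀ y ∈ latticeHull Δ, 0 ≤ dot y v :=
      fun y hy => convexHull_min h0 (hconv v 0) hy
    -- 2v ∈ polarDual (latticeHull Δ) ∩ latt
    have h2v : (2 : ℝ) • v ∈ polarDual (latticeHull Δ) ∩ latt (Fin d) := by
      constructor
      · intro y hy
        have h1 := h0' y hy
        have : dot y ((2:ℝ) • v) = 2 * dot y v := by
          simp only [dot, Pi.smul_apply, smul_eq_mul, Finset.mul_sum]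
          exact Finset.sum_congr rfl fun i _ => by ring
        rw [this]; linarith
      · intro i
        obtain ⟨b, hb⟩ := hv2.2 i
        refine ⟨2 * b, ?_⟩
        have : ((2:ℝ) • v) i = 2 * v i := rfl
        rw [this, hb]; push_cast; ring
    have h2v' : (2 : ℝ) • v ∈ polarDual Δ := by
      rw [← hQ]
      exact subset_convexHull ℝ _ h2v
    have h0mem : (0 : Fin d → ℝ) ∈ polarDual Δ := by
      intro x hx; simp [dot]
    have hseg : v ∈ openSegment ℝ (0 : Fin d → ℝ) ((2:ℝ) • v) := by
      refine ⟨1/2, 1/2, by norm_num, by norm_num, by norm_num, ?_⟩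
      funext i
      simp only [Pi.add_apply, Pi.smul_apply, smul_eq_mul, Pi.zero_apply]
      ring
    have := hv.2 h0mem h2v' hseg
    exact hv0 this.symm
  obtain ⟨x, ⟨hxΔ, hxlatt⟩, hxv⟩ := key
  constructor
  · exact ⟨⟨x, hxΔ, hxv⟩, by rintro t ⟨y, hy, rfl⟩; exact hvmem y hy⟩
  · exact ⟨x, ⟨hxΔ, hxv⟩, hxlatt⟩
end
end
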